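/- Let I ∈ ℤ_{≥1}, J ∈ ℤ_{≥1}, and b ∈ ((I+J-2)/(I+J-1), 1). Define 𝔇_*(z) = z^{J/I} · ((bJ - (J-1))z - ((I+J)b - (I+J-1))) / (z - (Ib - (I-1))). Then for every z on the unit circle with z ≠ 1, one has |𝔇_*(z)| < 1. Precisely, for z = e^{iθ} with θ ∈ (-π, π] \ {0}, |𝔇_*(e^{iθ})|² = 1 - 2J(1-b)(1-cos θ)((I+J)b - (I+J-2)) / (1 + (Ib - (I-1))² - 2(Ib - (I-1))cos θ) < 1. -/

import Mathlib

open Real Complex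

/-- **Steepest descent bound for `𝔇_*` on the unit circle** (condition (SD.𝒞₁) of the paper).
Let `I, J ≥ 1` and `b ∈ ((I+J-2)/(I+J-1), 1)`, and let
`𝔇_*(z) = z^{J/I} ((bJ-(J-1))z - ((I+J)b-(I+J-1)))/(z - (Ib-(I-1)))`
(the fractional power taken with `|z^{J/I}| = |z|^{J/I}`).  Then for `z = e^{iθ}`,
`θ ∈ (-π, π] \ {0}`,
`|𝔇_*(e^{iθ})|² = 1 - 2J(1-b)(1-cos θ)((I+J)b-(I+J-2)) / (1 + (Ib-(I-1))² - 2(Ib-(I-1))cos θ)`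
and this quantity is `< 1`. -/
theorem Dstar_unitCircle_bound (I J : ℕ) (hI : 1 ≤ I) (hJ : 1 ≤ J) (b : ℝ)
    (hb : b ∈ Set.Ioo (((I : ℝ) + J - 2) / ((I : ℝ) + J - 1)) 1)
    (θ : ℝ) (hθ : θ ∈ Set.Ioc (-π) π) (hθ0 : θ ≠ 0) :
    (‖Complex.exp (θ * Complex.I)‖ ^ ((J : ℝ) / I) *
        ‖((((b * J - ((J : ℝ) - 1) : ℝ) : ℂ) * Complex.exp (θ * Complex.I)
              - ((((I : ℝ) + J) * b - ((I : ℝ) + J - 1) : ℝ) : ℂ)) /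
            (Complex.exp (θ * Complex.I) - (((I : ℝ) * b - ((I : ℝ) - 1) : ℝ) : ℂ)))‖) ^ 2
      = 1 - 2 * J * (1 - b) * (1 - Real.cos θ) * (((I : ℝ) + J) * b - ((I : ℝ) + J - 2)) /
          (1 + ((I : ℝ) * b - ((I : ℝ) - 1)) ^ 2
            - 2 * ((I : ℝ) * b - ((I : ℝ) - 1)) * Real.cos θ) ∧
    (‖Complex.exp (θ * Complex.I)‖ ^ ((J : ℝ) / I) *
        ‖((((b * J - ((J : ℝ) - 1) : ℝ) : ℂ) * Complex.exp (θ * Complex.I)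
              - ((((I : ℝ) + J) * b - ((I : ℝ) + J - 1) : ℝ) : ℂ)) /
            (Complex.exp (θ * Complex.I) - (((I : ℝ) * b - ((I : ℝ) - 1) : ℝ) : ℂ)))‖) ^ 2
      < 1 := by
  obtain ⟨hb1, hb2⟩ := hb
  have hI1 : (1 : ℝ) ≤ I := by exact_mod_cast hI
  have hJ1 : (1 : ℝ) ≤ J := by exact_mod_cast hJ
  have hIJ : (0 : ℝ) < (I : ℝ) + J - 1 := by linarith
  have hb1' : (I : ℝ) + J - 2 < b * ((I : ℝ) + J - 1) := by
    have := (div_lt_iff₀ hIJ).mp hb1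
    linarith
  -- key positivity facts
  set d : ℝ := (I : ℝ) * b - ((I : ℝ) - 1) with hd
  have hbpos : 0 < b := by nlinarith
  have hd1 : d < 1 := by nlinarith
  have hd0 : 0 < d := by nlinarith
  have hcos1 : Real.cos θ < 1 := by
    rcases (Real.cos_le_one θ).lt_or_eq with h | h
    · exact h
    · exfalso
      have hπ := Real.pi_pos
      exact hθ0 ((Real.cos_eq_one_iff_of_lt_of_lt (x := θ) (by linarith [hθ.1])
        (by linarith [hθ.2])).mp h)
  have hcosle : Real.cos θ ≤ 1 := hcos1.le
  have hcosge : -1 ≤ Real.cos θ := Real.neg_one_le_cos θ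
  have hDen : 0 < 1 + d ^ 2 - 2 * d * Real.cos θ := by nlinarith
  -- numerator positivity
  have hNum : 0 < 2 * J * (1 - b) * (1 - Real.cos θ) * (((I : ℝ) + J) * b - ((I : ℝ) + J - 2)) := by
    have h1 : (0:ℝ) < 2 * J := by linarith
    have h2 : (0:ℝ) < 1 - b := by linarith
    have h3 : (0:ℝ) < 1 - Real.cos θ := by linarith
    have h4 : (0:ℝ) < ((I : ℝ) + J) * b - ((I : ℝ) + J - 2) := by nlinarith
    positivity
  -- compute the modulus squared
  have habs1 : ‖Complex.exp (θ * Complex.I)‖ = 1 :=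
    Complex.norm_exp_ofReal_mul_I θ
  have hzne : Complex.exp (θ * Complex.I) - (((I : ℝ) * b - ((I : ℝ) - 1) : ℝ) : ℂ) ≠ 0 := by
    intro h
    have hre : (Complex.exp ((θ:ℂ) * Complex.I) - (((I : ℝ) * b - ((I : ℝ) - 1) : ℝ) : ℂ)).im = 0 := by
      rw [h]; simp
    have him : Real.sin θ = 0 := by
      simpa [Complex.exp_ofReal_mul_I_im] using hre
    have hre2 : (Complex.exp ((θ:ℂ) * Complex.I) - (((I : ℝ) * b - ((I : ℝ) - 1) : ℝ) : ℂ)).re = 0 := by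
      rw [h]; simp
    have hcosd : Real.cos θ = d := by
      have := hre2
      simp [Complex.exp_ofReal_mul_I_re] at this
      linarith
    have : Real.cos θ ^ 2 + Real.sin θ ^ 2 = 1 := Real.cos_sq_add_sin_sq θ
    rw [hcosd, him] at this
    nlinarith
  have hkey : (‖((((b * J - ((J : ℝ) - 1) : ℝ) : ℂ) * Complex.exp (θ * Complex.I)
              - ((((I : ℝ) + J) * b - ((I : ℝ) + J - 1) : ℝ) : ℂ)) /
            (Complex.exp (θ * Complex.I) - (((I : ℝ) * b - ((I : ℝ) - 1) : ℝ) : ℂ)))‖) ^ 2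
      = ((b * J - ((J : ℝ) - 1)) ^ 2 + (((I : ℝ) + J) * b - ((I : ℝ) + J - 1)) ^ 2
          - 2 * (b * J - ((J : ℝ) - 1)) * (((I : ℝ) + J) * b - ((I : ℝ) + J - 1)) * Real.cos θ)
        / (1 + d ^ 2 - 2 * d * Real.cos θ) := by
    have hs : Real.sin θ ^ 2 = 1 - Real.cos θ ^ 2 := by
      nlinarith [Real.cos_sq_add_sin_sq θ]
    have hnum : Complex.normSq ((((b * J - ((J : ℝ) - 1) : ℝ) : ℂ) * Complex.exp (θ * Complex.I)
              - ((((I : ℝ) + J) * b - ((I : ℝ) + J - 1) : ℝ) : ℂ)))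
        = (b * J - ((J : ℝ) - 1)) ^ 2 + (((I : ℝ) + J) * b - ((I : ℝ) + J - 1)) ^ 2
          - 2 * (b * J - ((J : ℝ) - 1)) * (((I : ℝ) + J) * b - ((I : ℝ) + J - 1)) * Real.cos θ := by
      simp only [Complex.normSq_apply, Complex.sub_re, Complex.sub_im, Complex.mul_re,
        Complex.mul_im, Complex.ofReal_re, Complex.ofReal_im, Complex.exp_ofReal_mul_I_re,
        Complex.exp_ofReal_mul_I_im]
      linear_combination (b * J - ((J : ℝ) - 1)) ^ 2 * hs
    have hden : Complex.normSq (Complex.exp (θ * Complex.I) - (((I : ℝ) * b - ((I : ℝ) - 1) : ℝ) : ℂ))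
        = 1 + d ^ 2 - 2 * d * Real.cos θ := by
      simp only [Complex.normSq_apply, Complex.sub_re, Complex.sub_im,
        Complex.ofReal_re, Complex.ofReal_im, Complex.exp_ofReal_mul_I_re,
        Complex.exp_ofReal_mul_I_im, hd]
      linear_combination hs
    rw [Complex.sq_norm, Complex.normSq_div, hnum, hden]
  have heq : (‖Complex.exp (θ * Complex.I)‖ ^ ((J : ℝ) / I) *
        ‖((((b * J - ((J : ℝ) - 1) : ℝ) : ℂ) * Complex.exp (θ * Complex.I)
              - ((((I : ℝ) + J) * b - ((I : ℝ) + J - 1) : ℝ) : ℂ)) /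
            (Complex.exp (θ * Complex.I) - (((I : ℝ) * b - ((I : ℝ) - 1) : ℝ) : ℂ)))‖) ^ 2
      = 1 - 2 * J * (1 - b) * (1 - Real.cos θ) * (((I : ℝ) + J) * b - ((I : ℝ) + J - 2)) /
          (1 + ((I : ℝ) * b - ((I : ℝ) - 1)) ^ 2
            - 2 * ((I : ℝ) * b - ((I : ℝ) - 1)) * Real.cos θ) := by
    rw [habs1, Real.one_rpow, one_mul, hkey]
    rw [eq_sub_iff_add_eq, ← add_div, div_eq_one_iff_eq (ne_of_gt hDen)]
    ring
  refine ⟨heq, ?_⟩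
  rw [heq]
  have : 0 < 2 * J * (1 - b) * (1 - Real.cos θ) * (((I : ℝ) + J) * b - ((I : ℝ) + J - 2)) /
          (1 + ((I : ℝ) * b - ((I : ℝ) - 1)) ^ 2
            - 2 * ((I : ℝ) * b - ((I : ℝ) - 1)) * Real.cos θ) := div_pos hNum hDen
  linarith
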